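/- Let C ⊆ ℝ² be a balanced configuration with minimal distance 1, and let P, Q ∈ C with dist(P,Q) = 1. Then it is not the case that both P and Q have exactly 5 neighbors. -/

import Mathlib

open Real

set_option linter.unusedSectionVars false
set_option maxHeartbeats 1000000
noncomputable section


-- separation: if cos d ≤ 1/2 and |d| < π/3 then contradiction
lemma sep_aux {d : ℝ} (h : Real.cos d ≤ 1/2) (hd : |d| < π/3) : False := by
  have h1 : Real.cos (π/3) < Real.cos |d| :=
    Real.cos_lt_cos_of_nonneg_of_le_pi (abs_nonneg d) (by linarith [Real.pi_pos]) hd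
  rw [Real.cos_abs, Real.cos_pi_div_three] at h1
  linarith

-- |exp(sI) - exp(tI)|^2 = 2 - 2 cos(s - t)
lemma abs_exp_sub_exp (s t : ℝ) :
    (‖Complex.exp (s * Complex.I) - Complex.exp (t * Complex.I)‖)^2
      = 2 - 2 * Real.cos (s - t) := by
  rw [← Complex.normSq_eq_norm_sq, Complex.exp_mul_I, Complex.exp_mul_I]
  simp only [Complex.normSq_apply, Complex.add_re, Complex.add_im, Complex.mul_re, Complex.mul_im,
    Complex.cos_ofReal_re, Complex.cos_ofReal_im, Complex.sin_ofReal_re, Complex.sin_ofReal_im,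
    Complex.I_re, Complex.I_im, Complex.sub_re, Complex.sub_im]
  rw [Real.cos_sub]
  nlinarith [Real.sin_sq_add_cos_sq s, Real.sin_sq_add_cos_sq t]

lemma sqrt3_sq : Real.sqrt 3 ^ 2 = 3 := Real.sq_sqrt (by norm_num)
lemma sqrt3_lt_two : Real.sqrt 3 < 2 := by
  nlinarith [sqrt3_sq, Real.sqrt_nonneg 3]

section Pent
variable {t1 t2 t3 t4 : ℝ}
  (h1 : π/3 ≤ t1) (h12 : t1 + π/3 ≤ t2) (h23 : t2 + π/3 ≤ t3) (h34 : t3 + π/3 ≤ t4)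
  (h4 : t4 ≤ 5*π/3)
  (hc : 1 + Real.cos t1 + Real.cos t2 + Real.cos t3 + Real.cos t4 = 0)
  (hs : Real.sin t1 + Real.sin t2 + Real.sin t3 + Real.sin t4 = 0)

include h1 h12 h23 h34 h4 hc hs

lemma pent1 : t1 + (2*π - t4) < π := by
  by_contra hcon
  push_neg at hcon
  have e2 : t2 = t1 + π/3 := by linarith
  have e3 : t3 = t1 + 2*π/3 := by linarith
  have e4 : t4 = t1 + π := by linarith
  have hc23 : Real.cos (2*π/3) = -(1/2) := by
    rw [show 2*π/3 = π - π/3 by ring, Real.cos_pi_sub, Real.cos_pi_div_three]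
  have hs23 : Real.sin (2*π/3) = Real.sqrt 3 / 2 := by
    rw [show 2*π/3 = π - π/3 by ring, Real.sin_pi_sub, Real.sin_pi_div_three]
  rw [e2, e3, e4] at hc hs
  rw [Real.cos_add, Real.cos_add, Real.cos_add, Real.cos_pi, Real.sin_pi,
    Real.cos_pi_div_three, Real.sin_pi_div_three, hc23, hs23] at hc
  rw [Real.sin_add, Real.sin_add, Real.sin_add, Real.cos_pi, Real.sin_pi,
    Real.cos_pi_div_three, Real.sin_pi_div_three, hc23, hs23] at hs
  -- hc : 1 - sqrt 3 * sin t1 = 0 (up to ring), hs : sqrt 3 * cos t1 = 0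
  have h3pos : (0:ℝ) < Real.sqrt 3 := Real.sqrt_pos.2 (by norm_num)
  have hcos0 : Real.cos t1 = 0 := by
    have : Real.sqrt 3 * Real.cos t1 = 0 := by linarith
    rcases mul_eq_zero.1 this with h | h
    · exact absurd h (ne_of_gt h3pos)
    · exact h
  have hsin : Real.sqrt 3 * Real.sin t1 = 1 := by linarith
  have hpy := Real.sin_sq_add_cos_sq t1
  nlinarith [sqrt3_sq, hsin, hcos0, hpy]

lemma pent3 : ¬(t1 = π/3 ∧ t4 = 5*π/3) := by
  rintro ⟨e1, e4⟩
  have hc4 : Real.cos (5*π/3) = 1/2 := by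
    rw [show 5*π/3 = 2*π - π/3 by ring, Real.cos_two_pi_sub, Real.cos_pi_div_three]
  rw [e1, e4, Real.cos_pi_div_three, hc4] at hc
  -- cos t2 + cos t3 = -2
  have hb2 := Real.neg_one_le_cos t2
  have hb3 := Real.neg_one_le_cos t3
  have e2 : Real.cos t2 = -1 := by linarith
  have e3 : Real.cos t3 = -1 := by linarith
  -- t2 ∈ [2π/3, π]
  have ht2 : t2 = π := by
    have hmem : t2 ∈ Set.Icc 0 π := ⟨by nlinarith [Real.pi_pos], by linarith [e1 ▸ h1]⟩
    have : Real.cos t2 = Real.cos π := by rw [e2, Real.cos_pi]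
    exact Real.injOn_cos hmem ⟨le_of_lt Real.pi_pos, le_refl π⟩ this
  have ht3 : t3 = 4*π/3 := by linarith
  rw [ht3, show 4*π/3 = π + π/3 by ring, Real.cos_add, Real.cos_pi, Real.sin_pi,
    Real.cos_pi_div_three] at e3
  norm_num at e3

end Pent
section Pent2
variable {t1 t2 t3 t4 : ℝ}
  (h1 : π/3 ≤ t1) (h12 : t1 + π/3 ≤ t2) (h23 : t2 + π/3 ≤ t3) (h34 : t3 + π/3 ≤ t4)
  (h4 : t4 ≤ 5*π/3)
  (hc : 1 + Real.cos t1 + Real.cos t2 + Real.cos t3 + Real.cos t4 = 0)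
  (hs : Real.sin t1 + Real.sin t2 + Real.sin t3 + Real.sin t4 = 0)

include h1 h12 h23 h34 h4 hc hs

lemma pent2 (e1 : t1 = π/3) : 2*π - t4 < π/2 := by
  by_contra hcon
  push_neg at hcon
  -- t4 ≤ 3π/2, t4 ≥ 4π/3
  have hπ := Real.pi_pos
  have b4l : 4*π/3 ≤ t4 := by linarith
  have b4u : t4 ≤ 3*π/2 := by linarith
  have b3u : t3 ≤ 7*π/6 := by linarith
  have b3l : π ≤ t3 := by linarith
  have b2u : t2 ≤ 5*π/6 := by linarith
  have b2l : 2*π/3 ≤ t2 := by linarith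
  -- trig values
  have hc56 : Real.cos (5*π/6) = -(Real.sqrt 3/2) := by
    rw [show 5*π/6 = π - π/6 by ring, Real.cos_pi_sub, Real.cos_pi_div_six]
  have hs56 : Real.sin (5*π/6) = 1/2 := by
    rw [show 5*π/6 = π - π/6 by ring, Real.sin_pi_sub, Real.sin_pi_div_six]
  -- the three relevant cosines expressed in cos/sin of t2,t3,t4
  have hA : Real.cos (5*π/6 - t2)
      = -(Real.sqrt 3/2) * Real.cos t2 + (1/2) * Real.sin t2 := by
    rw [Real.cos_sub, hc56, hs56]
  have hB : Real.cos (t3 - 5*π/6)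
      = -(Real.sqrt 3/2) * Real.cos t3 + (1/2) * Real.sin t3 := by
    rw [Real.cos_sub, hc56, hs56]
    ring
  have hC : Real.cos (2*π - t4 - π/6)
      = (Real.sqrt 3/2) * Real.cos t4 - (1/2) * Real.sin t4 := by
    rw [show 2*π - t4 - π/6 = 2*π - (t4 + π/6) by ring, Real.cos_two_pi_sub,
      Real.cos_add, Real.cos_pi_div_six, Real.sin_pi_div_six]; ring
  rw [e1, Real.cos_pi_div_three] at hc
  rw [e1, Real.sin_pi_div_three] at hs
  -- key identity
  have key : Real.cos (5*π/6 - t2) + Real.cos (t3 - 5*π/6)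
      = Real.sqrt 3/2 + Real.cos (2*π - t4 - π/6) := by
    rw [hA, hB, hC]; linear_combination (-(Real.sqrt 3/2)) * hc + (1/2) * hs
  -- bounds
  have iA : Real.sqrt 3/2 ≤ Real.cos (5*π/6 - t2) := by
    have h : Real.cos (π/6) ≤ Real.cos (5*π/6 - t2) :=
      Real.cos_le_cos_of_nonneg_of_le_pi (by linarith) (by linarith) (by linarith)
    rwa [Real.cos_pi_div_six] at h
  have iB : 1/2 ≤ Real.cos (t3 - 5*π/6) := by
    have h : Real.cos (π/3) ≤ Real.cos (t3 - 5*π/6) :=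
      Real.cos_le_cos_of_nonneg_of_le_pi (by linarith) (by linarith) (by linarith)
    rwa [Real.cos_pi_div_three] at h
  have iC : Real.cos (2*π - t4 - π/6) ≤ 1/2 := by
    have h : Real.cos (2*π - t4 - π/6) ≤ Real.cos (π/3) :=
      Real.cos_le_cos_of_nonneg_of_le_pi (by linarith) (by linarith) (by linarith)
    rwa [Real.cos_pi_div_three] at h
  -- equalities
  have eA : Real.cos (5*π/6 - t2) = Real.sqrt 3/2 := by linarith
  have eB : Real.cos (t3 - 5*π/6) = 1/2 := by linarith
  have eC : Real.cos (2*π - t4 - π/6) = 1/2 := by linarith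
  -- extract angles by injectivity of cos on [0,π]
  have et2 : t2 = 2*π/3 := by
    have h : 5*π/6 - t2 = π/6 := by
      apply Real.injOn_cos (Set.mem_Icc.2 ⟨by linarith, by linarith⟩)
        (Set.mem_Icc.2 ⟨by linarith, by linarith⟩)
      rw [eA, Real.cos_pi_div_six]
    linarith
  have et3 : t3 = 7*π/6 := by
    have h : t3 - 5*π/6 = π/3 := by
      apply Real.injOn_cos (Set.mem_Icc.2 ⟨by linarith, by linarith⟩)
        (Set.mem_Icc.2 ⟨by linarith, by linarith⟩)
      rw [eB, Real.cos_pi_div_three]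
    linarith
  have et4 : t4 = 3*π/2 := by
    have h : 2*π - t4 - π/6 = π/3 := by
      apply Real.injOn_cos (Set.mem_Icc.2 ⟨by linarith, by linarith⟩)
        (Set.mem_Icc.2 ⟨by linarith, by linarith⟩)
      rw [eC, Real.cos_pi_div_three]
    linarith
  -- plug back into hc : cos t2 + cos t3 + cos t4 = -3/2
  have v2 : Real.cos (2*π/3) = -(1/2) := by
    rw [show 2*π/3 = π - π/3 by ring, Real.cos_pi_sub, Real.cos_pi_div_three]
  have v3 : Real.cos (7*π/6) = -(Real.sqrt 3/2) := by
    rw [show 7*π/6 = π + π/6 by ring, Real.cos_add, Real.cos_pi, Real.sin_pi,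
      Real.cos_pi_div_six]; ring
  have v4 : Real.cos (3*π/2) = 0 := by
    rw [show 3*π/2 = π + π/2 by ring, Real.cos_add, Real.cos_pi, Real.sin_pi,
      Real.cos_pi_div_two]; ring
  rw [et2, et3, et4, v2, v3, v4] at hc
  -- 1 + 1/2 - 1/2 - √3/2 + 0 = 0  →  √3 = 2
  nlinarith [sqrt3_lt_two]

lemma pent2' (e4 : t4 = 5*π/3) : t1 < π/2 := by
  have := pent2 (t1 := 2*π - t4) (t2 := 2*π - t3) (t3 := 2*π - t2) (t4 := 2*π - t1)
    (by linarith) (by linarith) (by linarith) (by linarith) (by linarith)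
    (by rw [Real.cos_two_pi_sub, Real.cos_two_pi_sub, Real.cos_two_pi_sub,
        Real.cos_two_pi_sub]; linarith)
    (by
      have s1 : Real.sin (2*π - t1) = -Real.sin t1 := by
        rw [show 2*π - t1 = 2*π + (-t1) by ring, Real.sin_add, Real.sin_two_pi,
          Real.cos_two_pi, Real.sin_neg]; ring
      have s2 : Real.sin (2*π - t2) = -Real.sin t2 := by
        rw [show 2*π - t2 = 2*π + (-t2) by ring, Real.sin_add, Real.sin_two_pi,
          Real.cos_two_pi, Real.sin_neg]; ring
      have s3 : Real.sin (2*π - t3) = -Real.sin t3 := by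
        rw [show 2*π - t3 = 2*π + (-t3) by ring, Real.sin_add, Real.sin_two_pi,
          Real.cos_two_pi, Real.sin_neg]; ring
      have s4 : Real.sin (2*π - t4) = -Real.sin t4 := by
        rw [show 2*π - t4 = 2*π + (-t4) by ring, Real.sin_add, Real.sin_two_pi,
          Real.cos_two_pi, Real.sin_neg]; ring
      rw [s1, s2, s3, s4]; linarith)
    (by linarith)
  linarith

end Pent2

lemma cross_normSq (a c : ℝ) :
    (‖Complex.exp ((a:ℂ) * Complex.I) + Complex.exp ((-c:ℝ) * Complex.I) - 1‖)^2
      = 3 + 2*Real.cos (a+c) - 2*Real.cos a - 2*Real.cos c := by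
  rw [← Complex.normSq_eq_norm_sq, Complex.exp_mul_I, Complex.exp_mul_I]
  simp only [Complex.normSq_apply, Complex.add_re, Complex.add_im, Complex.sub_re, Complex.sub_im,
    Complex.mul_re, Complex.mul_im, Complex.cos_ofReal_re, Complex.cos_ofReal_im,
    Complex.sin_ofReal_re, Complex.sin_ofReal_im, Complex.I_re, Complex.I_im,
    Complex.one_re, Complex.one_im]
  rw [Real.cos_add, Real.cos_neg, Real.sin_neg]
  nlinarith [Real.sin_sq_add_cos_sq a, Real.sin_sq_add_cos_sq c]

lemma cross_ineq {a c : ℝ} (ha1 : π/3 ≤ a) (ha2 : a ≤ 2*π/3) (hc1 : π/3 ≤ c) (hc2 : c ≤ 2*π/3)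
    (h : Real.cos a + Real.cos c - Real.cos (a+c) ≤ 1) : π ≤ a + c := by
  by_contra hcon
  push_neg at hcon
  have hπ := Real.pi_pos
  have hx : Real.cos (a+c) = 2 * Real.cos ((a+c)/2)^2 - 1 := by
    have h2 := Real.cos_two_mul ((a+c)/2)
    rw [show 2*((a+c)/2) = a+c by ring] at h2
    exact h2
  have hsum : Real.cos a + Real.cos c
      = 2 * Real.cos ((a+c)/2) * Real.cos ((a-c)/2) := by
    rw [show a = (a+c)/2 + (a-c)/2 by ring, show c = (a+c)/2 - (a-c)/2 by ring] at h ⊢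
    rw [Real.cos_add, Real.cos_sub]; ring_nf
  have hxpos : 0 < Real.cos ((a+c)/2) :=
    Real.cos_pos_of_mem_Ioo ⟨by linarith, by linarith⟩
  have hyb : Real.sqrt 3 / 2 ≤ Real.cos ((a-c)/2) := by
    have h1 : Real.cos (π/6) ≤ Real.cos |(a-c)/2| :=
      Real.cos_le_cos_of_nonneg_of_le_pi (abs_nonneg _) (by linarith)
        (abs_le.2 ⟨by linarith, by linarith⟩)
    rwa [Real.cos_abs, Real.cos_pi_div_six] at h1
  have hxb : Real.cos ((a+c)/2) ≤ 1/2 := by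
    have h1 : Real.cos ((a+c)/2) ≤ Real.cos (π/3) :=
      Real.cos_le_cos_of_nonneg_of_le_pi (by linarith) (by linarith) (by linarith)
    rwa [Real.cos_pi_div_three] at h1
  have hlt : Real.cos ((a+c)/2) < Real.cos ((a-c)/2) := by
    nlinarith [sqrt3_sq, Real.sqrt_nonneg 3]
  nlinarith [mul_pos hxpos (sub_pos.2 hlt)]

lemma cross_eq {a c : ℝ} (ha1 : π/3 ≤ a) (ha2 : a ≤ 2*π/3) (hc1 : π/3 ≤ c) (hc2 : c ≤ 2*π/3)
    (hre : Real.cos a + Real.cos c = 1) (him : Real.sin a = Real.sin c) :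
    a = π/3 ∧ c = π/3 := by
  have hπ := Real.pi_pos
  have hdiff : 2 * Real.cos ((a+c)/2) * Real.sin ((a-c)/2) = 0 := by
    have e : Real.sin a - Real.sin c
        = 2 * Real.cos ((a+c)/2) * Real.sin ((a-c)/2) := by
      rw [show a = (a+c)/2 + (a-c)/2 by ring, show c = (a+c)/2 - (a-c)/2 by ring]
      rw [Real.sin_add, Real.sin_sub]; ring_nf
    rw [← e, him, sub_self]
  rcases mul_eq_zero.1 hdiff with h | h
  · exfalso
    have hx0 : Real.cos ((a+c)/2) = 0 := by
      rcases mul_eq_zero.1 h with h' | h'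
      · norm_num at h'
      · exact h'
    have hx : (a+c)/2 = π/2 := by
      apply Real.injOn_cos (Set.mem_Icc.2 ⟨by linarith, by linarith⟩)
        (Set.mem_Icc.2 ⟨by linarith, by linarith⟩)
      rw [hx0, Real.cos_pi_div_two]
    have hc' : c = π - a := by linarith
    rw [hc', Real.cos_pi_sub] at hre
    simp at hre
  · have hy0 : (a-c)/2 = 0 := by
      have hb : |(a-c)/2| < π := by
        rw [abs_lt]; constructor <;> linarith
      exact (Real.sin_eq_zero_iff_of_lt_of_lt (by linarith [abs_lt.1 hb]) (by
        linarith [abs_lt.1 hb])).1 h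
    have hac : a = c := by linarith
    have hcos : Real.cos a = 1/2 := by rw [hac] at hre ⊢; linarith
    have : a = π/3 := by
      apply Real.injOn_cos (Set.mem_Icc.2 ⟨by linarith, by linarith⟩)
        (Set.mem_Icc.2 ⟨by linarith, by linarith⟩)
      rw [hcos, Real.cos_pi_div_three]
    exact ⟨this, by rw [← hac]; exact this⟩

open EuclideanGeometry RealInnerProductSpace

/-- The Euclidean plane. -/
abbrev E2 := EuclideanSpace ℝ (Fin 2)

/-- A configuration `C ⊆ ℝ²` is balanced if for every `P ∈ C` and every `d > 0` the set of
points of `C` at distance `d` from `P` is finite and the vectors from `P` to these points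
sum to zero. -/
def IsBalanced (C : Set E2) : Prop :=
  ∀ P ∈ C, ∀ d : ℝ, 0 < d →
    {x ∈ C | dist x P = d}.Finite ∧ ∑ᶠ x ∈ {x ∈ C | dist x P = d}, (x - P) = 0

/-- `C` has minimal distance 1: distinct points are at distance at least 1, and some pair of
points is at distance exactly 1. -/
def MinDistOne (C : Set E2) : Prop :=
  (∀ x ∈ C, ∀ y ∈ C, x ≠ y → 1 ≤ dist x y) ∧ ∃ x ∈ C, ∃ y ∈ C, dist x y = 1

/-- The set of neighbors (points of `C` at distance exactly 1) of `P`. -/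
def nbrs (C : Set E2) (P : E2) : Set E2 := {x ∈ C | dist x P = 1}

lemma side_analysis (C : Set E2) (φ : E2 ≃ₗᵢ[ℝ] ℂ)
    (hmin1 : ∀ x ∈ C, ∀ y ∈ C, x ≠ y → 1 ≤ dist x y)
    (R S : E2) (hS : S ∈ C) (hRS : dist R S = 1)
    (hfin : (nbrs C R).Finite)
    (hsum0 : ∑ᶠ x ∈ nbrs C R, (x - R) = 0)
    (h5 : (nbrs C R).encard = 5) :
    ∃ t1 t2 t3 t4 : ℝ, ∃ A B : E2, A ∈ C ∧ B ∈ C ∧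
      φ (A - R) = φ (S - R) * Complex.exp ((t1:ℝ) * Complex.I) ∧
      φ (B - R) = φ (S - R) * Complex.exp ((t4:ℝ) * Complex.I) ∧
      π/3 ≤ t1 ∧ t1 + π/3 ≤ t2 ∧ t2 + π/3 ≤ t3 ∧ t3 + π/3 ≤ t4 ∧ t4 ≤ 5*π/3 ∧
      1 + Real.cos t1 + Real.cos t2 + Real.cos t3 + Real.cos t4 = 0 ∧
      Real.sin t1 + Real.sin t2 + Real.sin t3 + Real.sin t4 = 0 := by
  classical
  set N := nbrs C R with hN
  set s : Finset E2 := hfin.toFinset with hsdef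
  have hsmem : ∀ {x}, x ∈ s ↔ x ∈ N := fun {x} => Set.Finite.mem_toFinset hfin
  have hscard : s.card = 5 := by
    have h := Set.Finite.encard_eq_coe_toFinset_card hfin
    rw [h5] at h
    exact_mod_cast h.symm
  have hSN : S ∈ N := ⟨hS, by rwa [dist_comm]⟩
  have hSmem : S ∈ s := hsmem.2 hSN
  have hsubC : ∀ {x}, x ∈ s → x ∈ C := fun {x} hx => (hsmem.1 hx).1
  -- the unit complex number in the direction of S - R
  set u : ℂ := φ (S - R) with hu
  have hud : ‖u‖ = 1 := by
    rw [hu]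
    have h1 : ‖φ (S - R)‖ = ‖S - R‖ := φ.norm_map _
    rw [h1, ← dist_eq_norm, dist_comm]
    exact hRS
  have hune : u ≠ 0 := by
    intro h; rw [h] at hud; simp at hud
  have huu : (starRingEnd ℂ) u * u = 1 := by
    rw [mul_comm, Complex.mul_conj]
    norm_cast
    rw [Complex.normSq_eq_norm_sq, hud]; norm_num
  -- rotated picture
  set g : E2 → ℂ := fun x => (starRingEnd ℂ) u * φ (x - R) with hg
  have hgS : g S = 1 := huu
  have habs : ∀ {x}, x ∈ s → ‖g x‖ = 1 := by
    intro x hx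
    rw [hg]
    simp only [norm_mul, Complex.norm_conj, hud, one_mul]
    have h1 : ‖φ (x - R)‖ = ‖x - R‖ := φ.norm_map _
    rw [h1, ← dist_eq_norm]
    exact (hsmem.1 hx).2
  have hgsub : ∀ x y : E2, g x - g y = (starRingEnd ℂ) u * φ (x - y) := by
    intro x y
    rw [hg]
    simp only
    rw [← mul_sub, ← map_sub]
    congr 2
    abel
  have hdist : ∀ {x y}, x ∈ s → y ∈ s → x ≠ y → 1 ≤ ‖g x - g y‖ := by
    intro x y hx hy hxy
    rw [hgsub]
    simp only [norm_mul, Complex.norm_conj, hud, one_mul]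
    have h1 : ‖φ (x - y)‖ = ‖x - y‖ := φ.norm_map _
    rw [h1, ← dist_eq_norm]
    exact hmin1 x (hsubC hx) y (hsubC hy) hxy
  have hgsum : ∑ x ∈ s, g x = 0 := by
    have h0 : ∑ x ∈ s, (x - R) = 0 := by
      rw [← finsum_mem_coe_finset, hsdef, hfin.coe_toFinset]
      exact hsum0
    rw [hg]
    simp only
    rw [← Finset.mul_sum, ← map_sum, h0, map_zero, mul_zero]
  -- angles
  set τ : E2 → ℝ := fun x =>
    if 0 < Complex.arg (g x) then Complex.arg (g x) else Complex.arg (g x) + 2*π with hτ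
  have hπ := Real.pi_pos
  have hexp : ∀ {x}, x ∈ s → x ≠ S →
      g x = Complex.exp ((τ x : ℝ) * Complex.I) ∧ 0 < τ x ∧ τ x < 2*π := by
    intro x hx hxS
    have harg0 : Complex.arg (g x) ≠ 0 := by
      intro h0
      have h1 := Complex.norm_mul_exp_arg_mul_I (g x)
      rw [h0, habs hx] at h1
      simp at h1
      have h2 := hdist hx hSmem hxS
      rw [hgS, ← h1, sub_self] at h2
      simp at h2
      linarith
    have hexpx : g x = Complex.exp ((Complex.arg (g x) : ℝ) * Complex.I) := by
      conv_lhs => rw [← Complex.norm_mul_exp_arg_mul_I (g x)]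
      rw [habs hx]
      simp
    have hlepi := Complex.arg_le_pi (g x)
    have hgtpi := Complex.neg_pi_lt_arg (g x)
    rw [hτ]
    simp only
    by_cases hpos : 0 < Complex.arg (g x)
    · rw [if_pos hpos]
      exact ⟨hexpx, hpos, by linarith⟩
    · rw [if_neg hpos]
      push_neg at hpos
      have hlt : Complex.arg (g x) < 0 := lt_of_le_of_ne hpos harg0
      refine ⟨?_, by linarith, by linarith⟩
      have hcast : ((Complex.arg (g x) + 2*π : ℝ) : ℂ) * Complex.I
          = (Complex.arg (g x) : ℝ) * Complex.I + 2*π*Complex.I := by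
        push_cast; ring
      rw [hcast, Complex.exp_add, Complex.exp_two_pi_mul_I, mul_one]
      exact hexpx
  
  -- real/imag parts are cos/sin of the angle
  have hcos : ∀ {x}, x ∈ s → x ≠ S → Real.cos (τ x) = (g x).re := by
    intro x hx hxS
    rw [(hexp hx hxS).1, Complex.exp_ofReal_mul_I_re]
  have hsin : ∀ {x}, x ∈ s → x ≠ S → Real.sin (τ x) = (g x).im := by
    intro x hx hxS
    rw [(hexp hx hxS).1, Complex.exp_ofReal_mul_I_im]
  -- pairwise angular separation facts
  have hsepτ : ∀ {x y}, x ∈ s → y ∈ s → x ≠ S → y ≠ S → x ≠ y →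
      Real.cos (τ x - τ y) ≤ 1/2 := by
    intro x y hx hy hxS hyS hxy
    have h1 := hdist hx hy hxy
    have h2 : 1 ≤ (‖g x - g y‖)^2 := by nlinarith
    rw [(hexp hx hxS).1, (hexp hy hyS).1, abs_exp_sub_exp] at h2
    linarith
  have hsepS : ∀ {x}, x ∈ s → x ≠ S → Real.cos (τ x) ≤ 1/2 := by
    intro x hx hxS
    have h1 := hdist hx hSmem hxS
    have h2 : 1 ≤ (‖g x - g S‖)^2 := by nlinarith
    have h0 : g S = Complex.exp ((0:ℝ) * Complex.I) := by rw [hgS]; simp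
    rw [(hexp hx hxS).1, h0, abs_exp_sub_exp, sub_zero] at h2
    linarith
  have hrange : ∀ {x}, x ∈ s → x ≠ S → π/3 ≤ τ x ∧ τ x ≤ 5*π/3 := by
    intro x hx hxS
    obtain ⟨-, h0, h2π⟩ := hexp hx hxS
    have hcc := hsepS hx hxS
    constructor
    · by_contra hcon; push_neg at hcon
      exact sep_aux hcc (by rw [abs_of_pos h0]; linarith)
    · by_contra hcon; push_neg at hcon
      have hcc2 : Real.cos (τ x - 2*π) ≤ 1/2 := by rw [Real.cos_sub_two_pi]; exact hcc
      exact sep_aux hcc2 (by rw [abs_of_neg (by linarith : τ x - 2*π < 0)]; linarith)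
  have hsep2 : ∀ {x y}, x ∈ s → y ∈ s → x ≠ S → y ≠ S → x ≠ y → π/3 ≤ |τ x - τ y| := by
    intro x y hx hy hxS hyS hxy
    by_contra hcon; push_neg at hcon
    exact sep_aux (hsepτ hx hy hxS hyS hxy) hcon
  have hτinj : ∀ {x y}, x ∈ s → y ∈ s → x ≠ S → y ≠ S → τ x = τ y → x = y := by
    intro x y hx hy hxS hyS he
    by_contra hxy
    have h := hsep2 hx hy hxS hyS hxy
    rw [he, sub_self, abs_zero] at h
    linarith
  -- the four non-S points and their angles
  set s' : Finset E2 := s.erase S with hs'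
  have hs'card : s'.card = 4 := by rw [hs', Finset.card_erase_of_mem hSmem, hscard]
  have hs'S : ∀ {x}, x ∈ s' → x ≠ S := fun {x} hx => Finset.ne_of_mem_erase hx
  have hs's : ∀ {x}, x ∈ s' → x ∈ s := fun {x} hx => Finset.mem_of_mem_erase hx
  set T : Finset ℝ := s'.image τ with hT
  have hTinjOn : ∀ x ∈ s', ∀ y ∈ s', τ x = τ y → x = y := fun x hx y hy he =>
    hτinj (hs's hx) (hs's hy) (hs'S hx) (hs'S hy) he
  have hTcard : T.card = 4 := by
    rw [hT, Finset.card_image_of_injOn hTinjOn, hs'card]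
  have hTne : T.Nonempty := by
    rw [← Finset.card_pos, hTcard]; norm_num
  have hTmem : ∀ {t}, t ∈ T → ∃ x, x ∈ s' ∧ τ x = t := by
    intro t ht
    rcases Finset.mem_image.1 ht with ⟨x, hx, he⟩
    exact ⟨x, hx, he⟩
  have hTrange : ∀ {t}, t ∈ T → π/3 ≤ t ∧ t ≤ 5*π/3 := by
    intro t ht
    obtain ⟨x, hx, he⟩ := hTmem ht
    rw [← he]
    exact hrange (hs's hx) (hs'S hx)
  have hTsep : ∀ {t r}, t ∈ T → r ∈ T → t ≠ r → π/3 ≤ |t - r| := by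
    intro t r ht hr htr
    obtain ⟨x, hx, hex⟩ := hTmem ht
    obtain ⟨y, hy, hey⟩ := hTmem hr
    have hxy : x ≠ y := by
      intro h
      apply htr
      rw [← hex, ← hey, h]
    rw [← hex, ← hey]
    exact hsep2 (hs's hx) (hs's hy) (hs'S hx) (hs'S hy) hxy
  -- sort the four angles
  set t1 := T.min' hTne with ht1def
  set t4 := T.max' hTne with ht4def
  have ht1T : t1 ∈ T := T.min'_mem hTne
  have ht4T : t4 ∈ T := T.max'_mem hTne
  have h14 : t1 < t4 := Finset.min'_lt_max'_of_card T (by rw [hTcard]; norm_num)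
  have ht4e : t4 ∈ T.erase t1 := Finset.mem_erase.2 ⟨ne_of_gt h14, ht4T⟩
  set T2 : Finset ℝ := (T.erase t1).erase t4 with hT2def
  have hT2card : T2.card = 2 := by
    rw [hT2def, Finset.card_erase_of_mem ht4e, Finset.card_erase_of_mem ht1T, hTcard]
  obtain ⟨p, q, hpq, hT2⟩ := Finset.card_eq_two.1 hT2card
  have hpT2 : p ∈ T2 := by rw [hT2]; simp
  have hqT2 : q ∈ T2 := by rw [hT2]; simp
  have hT2T : ∀ {t}, t ∈ T2 → t ∈ T ∧ t ≠ t1 ∧ t ≠ t4 := by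
    intro t ht
    rw [hT2def] at ht
    have h1 := Finset.mem_of_mem_erase ht
    exact ⟨Finset.mem_of_mem_erase h1, Finset.ne_of_mem_erase h1, Finset.ne_of_mem_erase ht⟩
  set t2 := min p q with ht2def
  set t3 := max p q with ht3def
  have ht2T2 : t2 ∈ T2 := by
    rcases le_total p q with h | h
    · rw [ht2def, min_eq_left h]; exact hpT2
    · rw [ht2def, min_eq_right h]; exact hqT2
  have ht3T2 : t3 ∈ T2 := by
    rcases le_total p q with h | h
    · rw [ht3def, max_eq_right h]; exact hqT2
    · rw [ht3def, max_eq_left h]; exact hpT2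
  have h23 : t2 < t3 := min_lt_max.2 hpq
  have h12 : t1 < t2 := lt_of_le_of_ne (T.min'_le t2 (hT2T ht2T2).1) (Ne.symm (hT2T ht2T2).2.1)
  have h34 : t3 < t4 := lt_of_le_of_ne (T.le_max' t3 (hT2T ht3T2).1) (hT2T ht3T2).2.2
  -- gap bounds
  have gap12 : t1 + π/3 ≤ t2 := by
    have h := hTsep (hT2T ht2T2).1 ht1T (Ne.symm (hT2T ht2T2).2.1).symm
    rw [abs_of_pos (by linarith : (0:ℝ) < t2 - t1)] at h
    linarith
  have gap23 : t2 + π/3 ≤ t3 := by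
    have h := hTsep (hT2T ht3T2).1 (hT2T ht2T2).1 (ne_of_gt h23)
    rw [abs_of_pos (by linarith : (0:ℝ) < t3 - t2)] at h
    linarith
  have gap34 : t3 + π/3 ≤ t4 := by
    have h := hTsep ht4T (hT2T ht3T2).1 (Ne.symm (hT2T ht3T2).2.2)
    rw [abs_of_pos (by linarith : (0:ℝ) < t4 - t3)] at h
    linarith
  have hb1 : π/3 ≤ t1 := (hTrange ht1T).1
  have hb4 : t4 ≤ 5*π/3 := (hTrange ht4T).2
  -- sum identities
  have hresum : 1 + ∑ x ∈ s', (g x).re = 0 := by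
    have h1 : (∑ x ∈ s, g x).re = 0 := by rw [hgsum]; rfl
    rw [Complex.re_sum] at h1
    have h2 : (g S).re + ∑ x ∈ s', (g x).re = ∑ x ∈ s, (g x).re :=
      Finset.add_sum_erase s (fun x => (g x).re) hSmem
    have h3 : (g S).re = 1 := by rw [hgS]; rfl
    rw [h3] at h2
    linarith
  have himsum : 0 + ∑ x ∈ s', (g x).im = 0 := by
    have h1 : (∑ x ∈ s, g x).im = 0 := by rw [hgsum]; rfl
    rw [Complex.im_sum] at h1
    have h2 : (g S).im + ∑ x ∈ s', (g x).im = ∑ x ∈ s, (g x).im :=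
      Finset.add_sum_erase s (fun x => (g x).im) hSmem
    have h3 : (g S).im = 0 := by rw [hgS]; rfl
    rw [h3] at h2
    linarith
  have hcossum : ∑ x ∈ s', (g x).re = ∑ t ∈ T, Real.cos t := by
    rw [hT, Finset.sum_image hTinjOn]
    exact Finset.sum_congr rfl fun x hx => (hcos (hs's hx) (hs'S hx)).symm
  have hsinsum : ∑ x ∈ s', (g x).im = ∑ t ∈ T, Real.sin t := by
    rw [hT, Finset.sum_image hTinjOn]
    exact Finset.sum_congr rfl fun x hx => (hsin (hs's hx) (hs'S hx)).symm
  have hsplit : ∀ f : ℝ → ℝ, ∑ t ∈ T, f t = f t1 + f t4 + (f p + f q) := by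
    intro f
    rw [← Finset.add_sum_erase T f ht1T, ← Finset.add_sum_erase (T.erase t1) f ht4e,
      ← hT2def, hT2, Finset.sum_pair hpq]
    ring
  have hminmax : ∀ f : ℝ → ℝ, f p + f q = f t2 + f t3 := by
    intro f
    rcases le_total p q with h | h
    · rw [ht2def, ht3def, min_eq_left h, max_eq_right h]
    · rw [ht2def, ht3def, min_eq_right h, max_eq_left h]; ring
  have hcs : 1 + Real.cos t1 + Real.cos t2 + Real.cos t3 + Real.cos t4 = 0 := by
    have h := hresum
    rw [hcossum, hsplit Real.cos, hminmax Real.cos] at h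
    linarith
  have hss : Real.sin t1 + Real.sin t2 + Real.sin t3 + Real.sin t4 = 0 := by
    have h := himsum
    rw [hsinsum, hsplit Real.sin, hminmax Real.sin] at h
    linarith
  -- witnesses
  obtain ⟨A, hA, hAe⟩ := hTmem ht1T
  obtain ⟨B, hB, hBe⟩ := hTmem ht4T
  have hwit : ∀ {x}, x ∈ s' → φ (x - R) = u * Complex.exp ((τ x : ℝ) * Complex.I) := by
    intro x hx
    have h := (hexp (hs's hx) (hs'S hx)).1
    rw [hg] at h
    simp only at h
    have h2 := congrArg (u * ·) h
    rwa [← mul_assoc, mul_comm u ((starRingEnd ℂ) u), huu, one_mul] at h2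
  refine ⟨t1, t2, t3, t4, A, B, hsubC (hs's hA), hsubC (hs's hB), ?_, ?_, hb1,
    by linarith, by linarith, by linarith, hb4, hcs, hss⟩
  · rw [← hAe]; exact hwit hA
  · rw [← hBe]; exact hwit hB

lemma exp_wrap (r : ℝ) :
    Complex.exp ((2*π - r : ℝ) * Complex.I) = Complex.exp ((-r : ℝ) * Complex.I) := by
  have h : ((2*π - r : ℝ) : ℂ) * Complex.I = (-r : ℝ) * Complex.I + 2*π*Complex.I := by
    push_cast; ring
  rw [h, Complex.exp_add, Complex.exp_two_pi_mul_I, mul_one]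

lemma cross_disj {a c : ℝ} (ha1 : π/3 ≤ a) (ha2 : a ≤ 2*π/3) (hc1 : π/3 ≤ c) (hc2 : c ≤ 2*π/3)
    (h : Complex.exp ((a:ℝ) * Complex.I) + Complex.exp ((2*π - c : ℝ) * Complex.I) - 1 = 0
      ∨ 1 ≤ ‖Complex.exp ((a:ℝ) * Complex.I) + Complex.exp ((2*π - c : ℝ) * Complex.I) - 1‖) :
    π ≤ a + c ∨ (a = π/3 ∧ c = π/3) := by
  rw [exp_wrap c] at h
  rcases h with h | h
  · right
    have hre := congrArg Complex.re h
    have him := congrArg Complex.im h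
    simp only [Complex.sub_re, Complex.add_re, Complex.exp_ofReal_mul_I_re, Complex.one_re,
      Complex.sub_im, Complex.add_im, Complex.exp_ofReal_mul_I_im, Complex.one_im,
      Complex.zero_re, Complex.zero_im, Real.cos_neg, Real.sin_neg] at hre him
    exact cross_eq ha1 ha2 hc1 hc2 (by linarith) (by linarith)
  · left
    have h2 : 1 ≤ (‖Complex.exp ((a:ℝ) * Complex.I) + Complex.exp ((-c : ℝ) * Complex.I) - 1‖)^2 := by
      nlinarith
    rw [cross_normSq a c] at h2
    exact cross_ineq ha1 ha2 hc1 hc2 (by linarith)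

/-- In a balanced configuration with minimal distance 1, two points at distance 1 cannot
both have exactly 5 neighbors. -/
theorem no_adjacent_five_five (C : Set E2)
    (hbal : IsBalanced C) (hmin : MinDistOne C)
    (P Q : E2) (hP : P ∈ C) (hQ : Q ∈ C) (hPQ : dist P Q = 1) :
    ¬((nbrs C P).encard = 5 ∧ (nbrs C Q).encard = 5) := by
  rintro ⟨h5P, h5Q⟩
  obtain ⟨hmin1, -⟩ := hmin
  have hπ := Real.pi_pos
  set φ : E2 ≃ₗᵢ[ℝ] ℂ :=
    (Complex.isometryOfOrthonormal (EuclideanSpace.basisFun (Fin 2) ℝ)).symm with hφ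
  have hbalP := hbal P hP 1 one_pos
  obtain ⟨t1, t2, t3, t4, A, B, hAC, hBC, hAe, hBe, p1, p12, p23, p34, p4, pc, ps⟩ :=
    side_analysis C φ hmin1 P Q hQ hPQ hbalP.1 hbalP.2 h5P
  have hbalQ := hbal Q hQ 1 one_pos
  obtain ⟨r1, r2, r3, r4, A', B', hA'C, hB'C, hA'e, hB'e, q1, q12, q23, q34, q4, qc, qs⟩ :=
    side_analysis C φ hmin1 Q P hP (by rwa [dist_comm]) hbalQ.1 hbalQ.2 h5Q
  -- basic bounds
  have pa2 : t1 ≤ 2*π/3 := by linarith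
  have pb1 : π/3 ≤ 2*π - t4 := by linarith
  have pb2 : 2*π - t4 ≤ 2*π/3 := by linarith
  have qa2 : r1 ≤ 2*π/3 := by linarith
  have qb1 : π/3 ≤ 2*π - r4 := by linarith
  have qb2 : 2*π - r4 ≤ 2*π/3 := by linarith
  -- the unit vector from P to Q
  have habsu : ‖φ (Q - P)‖ = 1 := by
    rw [φ.norm_map, ← dist_eq_norm, dist_comm]
    exact hPQ
  have hune : φ (Q - P) ≠ 0 := by
    intro h; rw [h] at habsu; simp at habsu
  have huPQ : φ (P - Q) = -φ (Q - P) := by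
    rw [← map_neg]; congr 1; abel
  -- distance between a t-neighbor of P and an r-neighbor of Q, in angle terms
  have hdiff : ∀ (X Y : E2) (tx ry : ℝ),
      φ (X - P) = φ (Q - P) * Complex.exp ((tx:ℝ) * Complex.I) →
      φ (Y - Q) = φ (P - Q) * Complex.exp ((ry:ℝ) * Complex.I) →
      φ (X - Y) = φ (Q - P) *
        (Complex.exp ((tx:ℝ) * Complex.I) + Complex.exp ((ry:ℝ) * Complex.I) - 1) := by
    intro X Y tx ry hX hY
    have h : X - Y = (X - P) - (Y - Q) - (Q - P) := by abel
    rw [h, map_sub, map_sub, hX, hY, huPQ]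
    ring
  -- generic dichotomy for a cross pair
  have hpair : ∀ (X Y : E2) (tx ry : ℝ), X ∈ C → Y ∈ C →
      φ (X - P) = φ (Q - P) * Complex.exp ((tx:ℝ) * Complex.I) →
      φ (Y - Q) = φ (P - Q) * Complex.exp ((ry:ℝ) * Complex.I) →
      Complex.exp ((tx:ℝ) * Complex.I) + Complex.exp ((ry:ℝ) * Complex.I) - 1 = 0
      ∨ 1 ≤ ‖Complex.exp ((tx:ℝ) * Complex.I) + Complex.exp ((ry:ℝ) * Complex.I) - 1‖ := by
    intro X Y tx ry hXC hYC hX hY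
    by_cases hXY : X = Y
    · left
      have h0 : φ (X - Y) = 0 := by rw [hXY, sub_self, map_zero]
      rw [hdiff X Y tx ry hX hY] at h0
      rcases mul_eq_zero.1 h0 with h | h
      · exact absurd h hune
      · exact h
    · right
      have h1 : 1 ≤ dist X Y := hmin1 X hXC Y hYC hXY
      have h2 : ‖φ (X - Y)‖ = dist X Y := by
        rw [φ.norm_map, ← dist_eq_norm]
      rw [hdiff X Y tx ry hX hY, norm_mul, habsu, one_mul] at h2
      linarith [h2.symm ▸ h1]
  -- top pair : A (angle t1 at P) and B' (angle r4 at Q)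
  have htop : π ≤ t1 + (2*π - r4) ∨ (t1 = π/3 ∧ 2*π - r4 = π/3) := by
    apply cross_disj p1 pa2 qb1 qb2
    rw [show 2*π - (2*π - r4) = r4 by ring]
    exact hpair A B' t1 r4 hAC hB'C hAe hB'e
  -- bottom pair : A' (angle r1 at Q) and B (angle t4 at P)
  have hbot : π ≤ r1 + (2*π - t4) ∨ (r1 = π/3 ∧ 2*π - t4 = π/3) := by
    apply cross_disj q1 qa2 pb1 pb2
    rw [show 2*π - (2*π - t4) = t4 by ring]
    have h := hpair B A' t4 r1 hBC hA'C hBe hA'e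
    rcases h with h | h
    · left; rw [← h]; ring
    · right
      have he : Complex.exp ((r1:ℝ) * Complex.I) + Complex.exp ((t4:ℝ) * Complex.I) - 1
          = Complex.exp ((t4:ℝ) * Complex.I) + Complex.exp ((r1:ℝ) * Complex.I) - 1 := by ring
      rw [he]
      exact h
  -- final case analysis using the pentagon lemmas
  rcases htop with htop | ⟨hta, htc⟩
  · rcases hbot with hbot | ⟨hba, hbc⟩
    · have hp := pent1 p1 p12 p23 p34 p4 pc ps
      have hq := pent1 q1 q12 q23 q34 q4 qc qs
      linarith
    · -- r1 = π/3 and t4 = 5π/3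
      have hp := pent2' p1 p12 p23 p34 p4 pc ps (by linarith)
      have hq := pent2 q1 q12 q23 q34 q4 qc qs hba
      linarith
  · rcases hbot with hbot | ⟨hba, hbc⟩
    · -- t1 = π/3 and r4 = 5π/3
      have hp := pent2 p1 p12 p23 p34 p4 pc ps hta
      have hq := pent2' q1 q12 q23 q34 q4 qc qs (by linarith)
      linarith
    · exact pent3 p1 p12 p23 p34 p4 pc ps ⟨hta, by linarith⟩
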